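/- arXiv:2508.20079 — 2 statements merged into one kernel-verified Lean document; each statement's English description precedes it below -/
import Mathlib

section
/- Let n ≥ 4 and let v be uniformly distributed on the unit sphere S^{n-1} ⊆ ℝ^n. For any nonzero x ∈ ℝ^n and r with 0 < r ≤ ‖x‖, P[x·v ≤ r] ≥ 1 - τ_n · (‖x‖/(r(n-3))) · e^{-r²(n-3)/(2‖x‖²)}, where τ_n = Γ(n/2)/(√π · Γ((n-1)/2)). -/
open MeasureTheory Metric
open scoped RealInnerProductSpace Pointwise ENNReal

lemma volC_le (m : ℕ) (hm : 0 < m) (s : ℝ) (hs0 : 0 < s) (hs1 : s ≤ 1)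
    (u : EuclideanSpace ℝ (Fin (m+1))) (hu : ‖u‖ = 1) :
    volume {y : EuclideanSpace ℝ (Fin (m+1)) | ‖y‖ < 1 ∧ s * ‖y‖ < ⟪u, y⟫}
      ≤ ENNReal.ofReal (Real.sqrt Real.pi ^ m / Real.Gamma (m/2+1)) *
        ENNReal.ofReal (∫ a in Set.Ioo (0:ℝ) 1,
          (min (a * Real.sqrt (1-s^2) / s) (Real.sqrt (1-a^2)))^m) := by
  haveI : Nonempty (Fin m) := ⟨⟨0, hm⟩⟩
  set R : ℝ → ℝ := fun a => min (a * Real.sqrt (1-s^2) / s) (Real.sqrt (1-a^2)) with hR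
  have hRcont : Continuous R := by
    apply Continuous.min
    · exact (continuous_id.mul continuous_const).div_const s
    · exact Real.continuous_sqrt.comp (continuous_const.sub (continuous_pow 2))
  -- orthonormal basis with b 0 = u
  have horth : Orthonormal ℝ (({0} : Set (Fin (m+1))).restrict (fun _ => u)) := by
    constructor
    · intro i; exact hu
    · intro i j hij
      exact absurd (Subtype.ext (by
        have hi := i.2; have hj := j.2
        simp only [Set.mem_singleton_iff] at hi hj
        rw [hi, hj])) hij
  obtain ⟨b, hb⟩ := horth.exists_orthonormalBasis_extension_of_card_eq
    (by simp [finrank_euclideanSpace])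
  have hb0 : b 0 = u := hb 0 rfl
  -- transfer to coordinates
  set S : Set (EuclideanSpace ℝ (Fin (m+1))) :=
    {z | ‖z‖ < 1 ∧ s * ‖z‖ < z 0} with hSdef
  have hSmeas : MeasurableSet S := by
    apply MeasurableSet.inter
    · exact measurableSet_lt continuous_norm.measurable measurable_const
    · exact measurableSet_lt (continuous_const.mul continuous_norm).measurable
        ((measurable_pi_apply (0 : Fin (m+1))).comp (WithLp.measurable_ofLp 2 (Fin (m+1) → ℝ)))
  have step1 : volume {y : EuclideanSpace ℝ (Fin (m+1)) | ‖y‖ < 1 ∧ s * ‖y‖ < ⟪u, y⟫}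
      = volume S := by
    have hpre : {y : EuclideanSpace ℝ (Fin (m+1)) | ‖y‖ < 1 ∧ s * ‖y‖ < ⟪u, y⟫}
        = b.repr ⁻¹' S := by
      ext y
      simp only [Set.mem_setOf_eq, Set.mem_preimage, hSdef]
      rw [b.repr.norm_map, b.repr_apply_apply, hb0]
    rw [hpre, b.measurePreserving_repr.measure_preimage hSmeas.nullMeasurableSet]
  -- to pi space
  set Shat : Set (Fin (m+1) → ℝ) :=
    {z | Real.sqrt (∑ i, z i^2) < 1 ∧ s * Real.sqrt (∑ i, z i^2) < z 0} with hShat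
  have hShatMeas : MeasurableSet Shat := by
    have hc : Continuous fun z : Fin (m+1) → ℝ => Real.sqrt (∑ i, z i^2) :=
      Real.continuous_sqrt.comp (continuous_finset_sum _ fun i _ => (continuous_apply i).pow 2)
    exact (measurableSet_lt hc.measurable measurable_const).inter
      (measurableSet_lt (continuous_const.mul hc).measurable (continuous_apply _).measurable)
  have step2 : volume S = volume Shat := by
    have hpre : S = (MeasurableEquiv.toLp 2 (Fin (m+1) → ℝ)).symm ⁻¹' Shat := by
      ext z
      simp only [Set.mem_setOf_eq, Set.mem_preimage, hSdef, hShat, EuclideanSpace.norm_eq,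
        MeasurableEquiv.coe_toLp_symm, Real.norm_eq_abs, sq_abs]
    rw [hpre, (EuclideanSpace.volume_preserving_symm_measurableEquiv_toLp
      (Fin (m+1))).measure_preimage hShatMeas.nullMeasurableSet]
  -- split first coordinate
  set T : Set (ℝ × (Fin m → ℝ)) :=
    {p | Real.sqrt (p.1^2 + ∑ j, p.2 j^2) < 1 ∧
         s * Real.sqrt (p.1^2 + ∑ j, p.2 j^2) < p.1} with hT
  have hq : Continuous fun p : ℝ × (Fin m → ℝ) => Real.sqrt (p.1^2 + ∑ j, p.2 j^2) :=
    Real.continuous_sqrt.comp ((continuous_fst.pow 2).add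
      (continuous_finset_sum _ fun j _ => ((continuous_apply j).comp continuous_snd).pow 2))
  have hTmeas : MeasurableSet T :=
    (measurableSet_lt hq.measurable measurable_const).inter
      (measurableSet_lt (continuous_const.mul hq).measurable continuous_fst.measurable)
  have step3 : volume Shat = (volume.prod volume) T := by
    have hpre : Shat = (MeasurableEquiv.piFinSuccAbove (fun _ : Fin (m+1) => ℝ) 0) ⁻¹' T := by
      ext z
      simp only [Set.mem_setOf_eq, Set.mem_preimage, hShat, hT,
        MeasurableEquiv.piFinSuccAbove_apply, Fin.insertNthEquiv,
        Equiv.coe_fn_symm_mk, Fin.removeNth]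
      rw [Fin.sum_univ_succAbove (fun i => z i ^ 2) 0]
    rw [hpre, (volume_preserving_piFinSuccAbove (fun _ : Fin (m+1) => ℝ) 0).measure_preimage
      hTmeas.nullMeasurableSet]; rfl
  -- slice bound
  have hRa0 : ∀ a ∈ Set.Ioo (0:ℝ) 1, 0 ≤ R a := by
    intro a ha
    exact le_min (div_nonneg (mul_nonneg ha.1.le (Real.sqrt_nonneg _)) hs0.le)
      (Real.sqrt_nonneg _)
  have hslice : ∀ a : ℝ, volume (Prod.mk a ⁻¹' T)
      ≤ Set.indicator (Set.Ioo (0:ℝ) 1)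
          (fun a => ENNReal.ofReal (Real.sqrt Real.pi ^ m / Real.Gamma (m/2+1)) *
            ENNReal.ofReal (R a ^ m)) a := by
    intro a
    by_cases ha : a ∈ Set.Ioo (0:ℝ) 1
    · rw [Set.indicator_of_mem ha]
      have ha0 : 0 < a := ha.1
      have hsub : Prod.mk a ⁻¹' T ⊆ {z' : Fin m → ℝ | Real.sqrt (∑ j, z' j^2) < R a} := by
        intro z' hz'
        obtain ⟨h1, h2⟩ := hz'
        have hQ0 : 0 ≤ ∑ j, z' j ^2 := Finset.sum_nonneg fun j _ => sq_nonneg _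
        have ht0 : 0 ≤ a^2 + ∑ j, z' j ^2 := add_nonneg (sq_nonneg a) hQ0
        have h1' : a^2 + ∑ j, z' j ^2 < 1 := by
          nlinarith [Real.sq_sqrt ht0, Real.sqrt_nonneg (a^2 + ∑ j, z' j ^2)]
        have h2' : s^2 * (a^2 + ∑ j, z' j ^2) < a^2 := by
          have hss : 0 ≤ s * Real.sqrt (a^2 + ∑ j, z' j ^2) := by positivity
          nlinarith [Real.sq_sqrt ht0]
        have hsq : (a * Real.sqrt (1-s^2)/s)^2 = a^2 * (1-s^2)/s^2 := by
          rw [div_pow, mul_pow, Real.sq_sqrt (by nlinarith : (0:ℝ) ≤ 1 - s^2)]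
        have hQlt2 : (∑ j, z' j ^2) < (a * Real.sqrt (1-s^2)/s)^2 := by
          rw [hsq, lt_div_iff₀ (by positivity)]
          nlinarith
        have hy0' : 0 ≤ a * Real.sqrt (1-s^2)/s := by positivity
        have hy0 : 0 < a * Real.sqrt (1-s^2)/s := by
          rcases eq_or_lt_of_le hy0' with h | h
          · exfalso; rw [← h] at hQlt2; simp at hQlt2; linarith
          · exact h
        exact lt_min ((Real.sqrt_lt' hy0).mpr hQlt2)
          (Real.sqrt_lt_sqrt hQ0 (by linarith))
      have hWmeas : MeasurableSet {z' : Fin m → ℝ | Real.sqrt (∑ j, z' j^2) < R a} := by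
        have : Continuous fun z' : Fin m → ℝ => Real.sqrt (∑ j, z' j^2) :=
          Real.continuous_sqrt.comp (continuous_finset_sum _ fun j _ => (continuous_apply j).pow 2)
        exact measurableSet_lt this.measurable measurable_const
      calc volume (Prod.mk a ⁻¹' T)
          ≤ volume {z' : Fin m → ℝ | Real.sqrt (∑ j, z' j^2) < R a} := measure_mono hsub
        _ = volume (ball (0 : EuclideanSpace ℝ (Fin m)) (R a)) := by
            rw [← (EuclideanSpace.volume_preserving_symm_measurableEquiv_toLp (Fin m)).measure_preimage
              hWmeas.nullMeasurableSet]
            congr 1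
            ext z
            simp only [Set.mem_preimage, Set.mem_setOf_eq, mem_ball_zero_iff,
              EuclideanSpace.norm_eq, Real.norm_eq_abs, sq_abs]
            rfl
        _ = ENNReal.ofReal (Real.sqrt Real.pi ^ m / Real.Gamma (m/2+1)) *
            ENNReal.ofReal (R a ^ m) := by
            rw [EuclideanSpace.volume_ball, Fintype.card_fin, mul_comm,
              ENNReal.ofReal_pow (hRa0 a ha)]
    · rw [Set.indicator_of_notMem ha]
      have : Prod.mk a ⁻¹' T = ∅ := by
        ext z'
        simp only [Set.mem_preimage, hT, Set.mem_setOf_eq, Set.mem_empty_iff_false, iff_false,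
          not_and, not_lt]
        intro h1
        rw [Set.mem_Ioo, not_and_or, not_lt, not_lt] at ha
        have hQ0 : 0 ≤ ∑ j, z' j ^2 := Finset.sum_nonneg fun j _ => sq_nonneg _
        rcases ha with ha | ha
        · exact le_trans ha (by positivity)
        · exfalso
          have : Real.sqrt (a^2) ≤ Real.sqrt (a^2 + ∑ j, z' j^2) :=
            Real.sqrt_le_sqrt (by linarith)
          rw [Real.sqrt_sq (by linarith : 0 ≤ a)] at this
          linarith
      rw [this, measure_empty]
  -- integrate
  have hInt : IntegrableOn (fun a => R a ^ m) (Set.Ioo (0:ℝ) 1) volume :=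
    ((hRcont.pow m).integrableOn_Icc).mono_set Set.Ioo_subset_Icc_self
  have hae : 0 ≤ᵐ[volume.restrict (Set.Ioo (0:ℝ) 1)] fun a => R a ^ m := by
    filter_upwards [ae_restrict_mem measurableSet_Ioo] with a ha
    exact pow_nonneg (hRa0 a ha) m
  have step4 : (volume.prod volume) T
      ≤ ENNReal.ofReal (Real.sqrt Real.pi ^ m / Real.Gamma (m/2+1)) *
        ENNReal.ofReal (∫ a in Set.Ioo (0:ℝ) 1, R a ^ m) := by
    rw [Measure.prod_apply hTmeas]
    calc ∫⁻ a, volume (Prod.mk a ⁻¹' T)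
        ≤ ∫⁻ a, Set.indicator (Set.Ioo (0:ℝ) 1)
            (fun a => ENNReal.ofReal (Real.sqrt Real.pi ^ m / Real.Gamma (m/2+1)) *
              ENNReal.ofReal (R a ^ m)) a := lintegral_mono hslice
      _ = ∫⁻ a in Set.Ioo (0:ℝ) 1,
            ENNReal.ofReal (Real.sqrt Real.pi ^ m / Real.Gamma (m/2+1)) *
              ENNReal.ofReal (R a ^ m) := lintegral_indicator measurableSet_Ioo _
      _ = ENNReal.ofReal (Real.sqrt Real.pi ^ m / Real.Gamma (m/2+1)) *
            ∫⁻ a in Set.Ioo (0:ℝ) 1, ENNReal.ofReal (R a ^ m) := lintegral_const_mul' _ _ (by simp)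
      _ = ENNReal.ofReal (Real.sqrt Real.pi ^ m / Real.Gamma (m/2+1)) *
            ENNReal.ofReal (∫ a in Set.Ioo (0:ℝ) 1, R a ^ m) := by
            rw [← ofReal_integral_eq_lintegral_ofReal hInt hae]
  calc volume {y : EuclideanSpace ℝ (Fin (m+1)) | ‖y‖ < 1 ∧ s * ‖y‖ < ⟪u, y⟫}
      = (volume.prod volume) T := by rw [step1, step2, step3]
    _ ≤ _ := step4

lemma integral_R_le (m : ℕ) (hm : 3 ≤ m) (s : ℝ) (hs0 : 0 < s) (hs1 : s ≤ 1) :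
    ∫ a in Set.Ioo (0:ℝ) 1, (min (a * Real.sqrt (1-s^2) / s) (Real.sqrt (1-a^2)))^m
      ≤ Real.exp (-(s^2*m)/2) * (s/(m+1) + 1/(s*m)) := by
  have hmpos : (0:ℝ) < m := by positivity
  set R : ℝ → ℝ := fun a => min (a * Real.sqrt (1-s^2) / s) (Real.sqrt (1-a^2)) with hR
  have hRcont : Continuous R := by
    apply Continuous.min
    · exact (continuous_id.mul continuous_const).div_const s
    · exact Real.continuous_sqrt.comp (continuous_const.sub (continuous_pow 2))
  have hRmcont : Continuous fun a => R a ^ m := hRcont.pow m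
  have hsqrt_exp : ∀ t : ℝ, Real.sqrt (1 - t^2) ≤ Real.exp (-(t^2)/2) := by
    intro t
    have h1 : 1 - t^2 ≤ Real.exp (-(t^2)) := by
      have := Real.add_one_le_exp (-(t^2)); linarith
    calc Real.sqrt (1 - t^2) ≤ Real.sqrt (Real.exp (-(t^2))) := Real.sqrt_le_sqrt h1
      _ = Real.exp (-(t^2)/2) := (Real.exp_half _).symm
  -- convert to interval integrals and split
  have hIoo : ∫ a in Set.Ioo (0:ℝ) 1, R a ^ m = (∫ a in (0:ℝ)..s, R a ^ m) + ∫ a in s..1, R a ^ m := by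
    rw [← MeasureTheory.integral_Ioc_eq_integral_Ioo, ← intervalIntegral.integral_of_le zero_le_one,
      intervalIntegral.integral_add_adjacent_intervals
        (hRmcont.intervalIntegrable _ _) (hRmcont.intervalIntegrable _ _)]
  -- first piece
  have h1 : (∫ a in (0:ℝ)..s, R a ^ m) ≤ Real.exp (-(s^2*m)/2) * (s/(m+1)) := by
    have hmono : ∀ a ∈ Set.Icc (0:ℝ) s, R a ^ m ≤ (Real.sqrt (1-s^2)/s)^m * a^m := by
      intro a ha
      have ha0 : 0 ≤ a := ha.1
      have hR0 : 0 ≤ R a := le_min (by positivity) (Real.sqrt_nonneg _)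
      have : R a ≤ (Real.sqrt (1-s^2)/s) * a := by
        calc R a ≤ a * Real.sqrt (1-s^2) / s := min_le_left _ _
          _ = (Real.sqrt (1-s^2)/s) * a := by ring
      calc R a ^ m ≤ ((Real.sqrt (1-s^2)/s) * a)^m := pow_le_pow_left₀ hR0 this m
        _ = (Real.sqrt (1-s^2)/s)^m * a^m := mul_pow _ _ _
    calc (∫ a in (0:ℝ)..s, R a ^ m)
        ≤ ∫ a in (0:ℝ)..s, (Real.sqrt (1-s^2)/s)^m * a^m := by
          apply intervalIntegral.integral_mono_on hs0.le
            (hRmcont.intervalIntegrable _ _)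
            ((continuous_const.mul (continuous_pow m)).intervalIntegrable _ _) hmono
      _ = (Real.sqrt (1-s^2)/s)^m * (s^(m+1)/(m+1)) := by
          rw [intervalIntegral.integral_const_mul, integral_pow]
          norm_num
      _ = Real.sqrt (1-s^2)^m * (s/(m+1)) := by
          rw [div_pow]
          field_simp
          ring
      _ ≤ Real.exp (-(s^2*m)/2) * (s/(m+1)) := by
          apply mul_le_mul_of_nonneg_right _ (by positivity)
          calc Real.sqrt (1-s^2)^m ≤ Real.exp (-(s^2)/2)^m :=
                pow_le_pow_left₀ (Real.sqrt_nonneg _) (hsqrt_exp s) m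
            _ = Real.exp (-(s^2*m)/2) := by
                rw [← Real.exp_nat_mul]; congr 1; ring
  -- second piece
  have h2 : (∫ a in s..1, R a ^ m) ≤ Real.exp (-(s^2*m)/2) * (1/(s*m)) := by
    have hFTC : (∫ a in s..1, a * Real.exp (-(a^2*m)/2))
        = (Real.exp (-(s^2*m)/2) - Real.exp (-((1:ℝ)^2*m)/2)) / m := by
      have hderiv : ∀ a ∈ Set.uIcc s (1:ℝ),
          HasDerivAt (fun a => -(1/(m:ℝ)) * Real.exp (-(a^2*m)/2))
            (a * Real.exp (-(a^2*m)/2)) a := by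
        intro a _
        have hpoly : HasDerivAt (fun a : ℝ => -(a^2*m)/2) (-(a*m)) a := by
          have := ((hasDerivAt_pow 2 a).mul_const ((m:ℝ))).neg.div_const 2
          exact this.congr_deriv (by norm_num <;> ring)
        have hexp := hpoly.exp
        have := hexp.const_mul (-(1/(m:ℝ)))
        exact this.congr_deriv (by field_simp [hmpos.ne'] <;> ring)
      rw [intervalIntegral.integral_eq_sub_of_hasDerivAt hderiv
        ((continuous_id.mul (Real.continuous_exp.comp
          (((continuous_pow 2).mul continuous_const).neg.div_const 2))).intervalIntegrable _ _)]
      field_simp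
      ring
    have hmono : ∀ a ∈ Set.Icc s (1:ℝ), R a ^ m ≤ (1/s) * (a * Real.exp (-(a^2*m)/2)) := by
      intro a ha
      have ha0 : 0 < a := lt_of_lt_of_le hs0 ha.1
      have hR0 : 0 ≤ R a := le_min (by positivity) (Real.sqrt_nonneg _)
      have hstep : R a ^ m ≤ Real.exp (-(a^2*m)/2) := by
        calc R a ^ m ≤ Real.sqrt (1-a^2) ^ m := pow_le_pow_left₀ hR0 (min_le_right _ _) m
          _ ≤ Real.exp (-(a^2)/2)^m := pow_le_pow_left₀ (Real.sqrt_nonneg _) (hsqrt_exp a) m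
          _ = Real.exp (-(a^2*m)/2) := by rw [← Real.exp_nat_mul]; congr 1; ring
      calc R a ^ m ≤ Real.exp (-(a^2*m)/2) := hstep
        _ ≤ (a/s) * Real.exp (-(a^2*m)/2) := by
            nlinarith [Real.exp_pos (-(a^2*m)/2), (one_le_div hs0).mpr ha.1,
              Real.exp_nonneg (-(a^2*m)/2)]
        _ = (1/s) * (a * Real.exp (-(a^2*m)/2)) := by ring
    calc (∫ a in s..1, R a ^ m)
        ≤ ∫ a in s..1, (1/s) * (a * Real.exp (-(a^2*m)/2)) := by
          apply intervalIntegral.integral_mono_on hs1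
            (hRmcont.intervalIntegrable _ _)
            ((continuous_const.mul (continuous_id.mul (Real.continuous_exp.comp
              (((continuous_pow 2).mul continuous_const).neg.div_const 2)))).intervalIntegrable _ _)
            hmono
      _ = (1/s) * ((Real.exp (-(s^2*m)/2) - Real.exp (-((1:ℝ)^2*m)/2)) / m) := by
          rw [intervalIntegral.integral_const_mul, hFTC]
      _ ≤ Real.exp (-(s^2*m)/2) * (1/(s*m)) := by
          have he : 0 ≤ Real.exp (-((1:ℝ)^2*m)/2) := Real.exp_nonneg _
          have heq : 1/s * ((Real.exp (-(s^2*m)/2) - Real.exp (-((1:ℝ)^2*m)/2)) / m)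
              = (Real.exp (-(s^2*m)/2) - Real.exp (-((1:ℝ)^2*m)/2)) * (1/(s*m)) := by
            field_simp
          rw [heq]
          exact mul_le_mul_of_nonneg_right (by linarith) (by positivity)
  calc ∫ a in Set.Ioo (0:ℝ) 1, R a ^ m
      = (∫ a in (0:ℝ)..s, R a ^ m) + ∫ a in s..1, R a ^ m := hIoo
    _ ≤ Real.exp (-(s^2*m)/2) * (s/(m+1)) + Real.exp (-(s^2*m)/2) * (1/(s*m)) :=
        add_le_add h1 h2
    _ = Real.exp (-(s^2*m)/2) * (s/(m+1) + 1/(s*m)) := by ring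

lemma const_ineq (m : ℕ) (hm : 3 ≤ m) (s : ℝ) (hs0 : 0 < s) (hs1 : s ≤ 1) :
    (Real.sqrt Real.pi ^ m / Real.Gamma (m/2+1)) *
      (Real.exp (-(s^2*m)/2) * (s/(m+1) + 1/(s*m)))
      ≤ (Real.sqrt Real.pi ^ (m+1) / Real.Gamma (((m:ℝ)+1)/2+1)) *
        ((Real.Gamma (((m:ℝ)+1)/2) / (Real.sqrt Real.pi * Real.Gamma ((m:ℝ)/2))) *
         (1/(s*((m:ℝ)-2))) * Real.exp (-(s^2*((m:ℝ)-2))/2)) := by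
  have hM : (3:ℝ) ≤ (m:ℝ) := by exact_mod_cast hm
  have hM0 : (0:ℝ) < m := by linarith
  have hsp : 0 < Real.sqrt Real.pi := Real.sqrt_pos.mpr Real.pi_pos
  have hG1 : 0 < Real.Gamma ((m:ℝ)/2) := Real.Gamma_pos_of_pos (by linarith)
  have hG2 : 0 < Real.Gamma (((m:ℝ)+1)/2) := Real.Gamma_pos_of_pos (by linarith)
  have hΓ1 : Real.Gamma ((m:ℝ)/2+1) = ((m:ℝ)/2) * Real.Gamma ((m:ℝ)/2) :=
    Real.Gamma_add_one (by positivity)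
  have hΓ2 : Real.Gamma (((m:ℝ)+1)/2+1) = (((m:ℝ)+1)/2) * Real.Gamma (((m:ℝ)+1)/2) :=
    Real.Gamma_add_one (by positivity)
  set u : ℝ := s^2 with hu
  have hu0 : 0 < u := by positivity
  -- key scalar inequality
  have hexp : Real.exp (-u) * (1+u) ≤ 1 := by
    have h := Real.add_one_le_exp u
    have hepos := Real.exp_pos u
    have : Real.exp (-u) = 1 / Real.exp u := by
      rw [Real.exp_neg]; exact inv_eq_one_div _
    rw [this, div_mul_eq_mul_div, div_le_one hepos]
    linarith
  have hkey : Real.exp (-u) * (u/((m:ℝ)+1) + 1/(m:ℝ)) ≤ (m:ℝ)/(((m:ℝ)+1)*((m:ℝ)-2)) := by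
    have h1u : (0:ℝ) < 1 + u := by linarith
    have hle : Real.exp (-u) ≤ 1/(1+u) := by
      rw [le_div_iff₀ h1u]; exact hexp
    have hnn : 0 ≤ u/((m:ℝ)+1) + 1/(m:ℝ) := by positivity
    calc Real.exp (-u) * (u/((m:ℝ)+1) + 1/(m:ℝ))
        ≤ (1/(1+u)) * (u/((m:ℝ)+1) + 1/(m:ℝ)) := mul_le_mul_of_nonneg_right hle hnn
      _ ≤ (m:ℝ)/(((m:ℝ)+1)*((m:ℝ)-2)) := by
          rw [div_mul_eq_mul_div, div_le_div_iff₀ h1u (by nlinarith)]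
          have e1 : (1:ℝ) * (u/((m:ℝ)+1) + 1/(m:ℝ)) = u/((m:ℝ)+1) + 1/(m:ℝ) := one_mul _
          rw [e1, div_add_div _ _ (by linarith : ((m:ℝ)+1) ≠ 0) (by linarith : (m:ℝ) ≠ 0),
            div_mul_eq_mul_div, div_le_iff₀ (by nlinarith : (0:ℝ) < ((m:ℝ)+1)*(m:ℝ))]
          nlinarith [mul_nonneg (mul_nonneg hu0.le hM0.le) (show (0:ℝ) ≤ (m:ℝ)+1 by linarith)]
  -- exp splitting
  have hsplit : Real.exp (-(s^2*(m:ℝ))/2) = Real.exp (-(s^2*((m:ℝ)-2))/2) * Real.exp (-u) := by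
    rw [← Real.exp_add]; congr 1; rw [hu]; ring
  set E : ℝ := Real.exp (-(s^2*((m:ℝ)-2))/2) with hE
  have hE0 : 0 < E := Real.exp_pos _
  -- reduce
  have hfrac : (2/(m:ℝ)) * Real.exp (-u) * (s/((m:ℝ)+1) + 1/(s*(m:ℝ)))
      ≤ 2/(((m:ℝ)+1)*s*((m:ℝ)-2)) := by
    have hsum : s/((m:ℝ)+1) + 1/(s*(m:ℝ)) = (u/((m:ℝ)+1) + 1/(m:ℝ))/s := by
      rw [hu]; field_simp
    rw [hsum]
    calc (2/(m:ℝ)) * Real.exp (-u) * ((u/((m:ℝ)+1) + 1/(m:ℝ))/s)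
        = (2/((m:ℝ)*s)) * (Real.exp (-u) * (u/((m:ℝ)+1) + 1/(m:ℝ))) := by
          field_simp
      _ ≤ (2/((m:ℝ)*s)) * ((m:ℝ)/(((m:ℝ)+1)*((m:ℝ)-2))) :=
          mul_le_mul_of_nonneg_left hkey (by positivity)
      _ = 2/(((m:ℝ)+1)*s*((m:ℝ)-2)) := by
          have hm2 : ((m:ℝ)-2) ≠ 0 := by linarith
          have hm1 : ((m:ℝ)+1) ≠ 0 := by linarith
          have hmne : (m:ℝ) ≠ 0 := by linarith
          field_simp
  -- put together
  have hL : (Real.sqrt Real.pi ^ m / Real.Gamma ((m:ℝ)/2+1)) *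
      (Real.exp (-(s^2*(m:ℝ))/2) * (s/((m:ℝ)+1) + 1/(s*(m:ℝ))))
      = (Real.sqrt Real.pi ^ m / Real.Gamma ((m:ℝ)/2) * E) *
        ((2/(m:ℝ)) * Real.exp (-u) * (s/((m:ℝ)+1) + 1/(s*(m:ℝ)))) := by
    rw [hΓ1, hsplit]
    field_simp
  have hR : (Real.sqrt Real.pi ^ (m+1) / Real.Gamma (((m:ℝ)+1)/2+1)) *
        ((Real.Gamma (((m:ℝ)+1)/2) / (Real.sqrt Real.pi * Real.Gamma ((m:ℝ)/2))) *
         (1/(s*((m:ℝ)-2))) * E)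
      = (Real.sqrt Real.pi ^ m / Real.Gamma ((m:ℝ)/2) * E) *
        (2/(((m:ℝ)+1)*s*((m:ℝ)-2))) := by
    rw [hΓ2, pow_succ]
    have hm2 : ((m:ℝ)-2) ≠ 0 := by linarith
    field_simp
  rw [hL, hR]
  apply mul_le_mul_of_nonneg_left hfrac
  positivity


/-- The uniform (rotation-invariant) probability measure on the unit sphere in `ℝⁿ`,
obtained by normalizing the surface measure `Measure.toSphere` of Lebesgue measure. -/
noncomputable def uniformSphere (n : ℕ) :
    Measure (sphere (0 : EuclideanSpace ℝ (Fin n)) 1) :=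
  ((volume : Measure (EuclideanSpace ℝ (Fin n))).toSphere Set.univ)⁻¹ •
    (volume : Measure (EuclideanSpace ℝ (Fin n))).toSphere

theorem stmt_6 (n : ℕ) (hn : 4 ≤ n) (x : EuclideanSpace ℝ (Fin n)) (hx : x ≠ 0)
    (r : ℝ) (hr0 : 0 < r) (hrx : r ≤ ‖x‖) :
    ((uniformSphere n) {v | ⟪x, (v : EuclideanSpace ℝ (Fin n))⟫ ≤ r}).toReal ≥
      1 - (Real.Gamma ((n : ℝ) / 2) / (Real.sqrt Real.pi * Real.Gamma (((n : ℝ) - 1) / 2))) *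
        (‖x‖ / (r * ((n : ℝ) - 3))) * Real.exp (-(r ^ 2 * ((n : ℝ) - 3)) / (2 * ‖x‖ ^ 2)) := by
  obtain ⟨m, rfl⟩ : ∃ m, n = m + 1 := ⟨n - 1, by omega⟩
  have hm : 3 ≤ m := by omega
  have hM : (3:ℝ) ≤ (m:ℝ) := by exact_mod_cast hm
  have hx0 : 0 < ‖x‖ := norm_pos_iff.mpr hx
  set s : ℝ := r / ‖x‖ with hsdef
  have hs0 : 0 < s := div_pos hr0 hx0
  have hs1 : s ≤ 1 := (div_le_one hx0).mpr hrx
  set u : EuclideanSpace ℝ (Fin (m+1)) := ‖x‖⁻¹ • x with hudef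
  have hu : ‖u‖ = 1 := by
    rw [hudef, norm_smul, norm_inv, norm_norm, inv_mul_cancel₀ hx0.ne']
  -- event rewrite
  set A : Set (sphere (0:EuclideanSpace ℝ (Fin (m+1))) 1) :=
    {v | s < ⟪u, (v:EuclideanSpace ℝ (Fin (m+1)))⟫} with hAdef
  have hevent : {v : sphere (0:EuclideanSpace ℝ (Fin (m+1))) 1 |
      ⟪x, (v:EuclideanSpace ℝ (Fin (m+1)))⟫ ≤ r} = Aᶜ := by
    ext v
    simp only [hAdef, Set.mem_setOf_eq, Set.mem_compl_iff, not_lt, hudef,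
      real_inner_smul_left, hsdef]
    rw [inv_mul_eq_div]
    exact (div_le_div_iff_of_pos_right hx0).symm
  have hAmeas : MeasurableSet A := by
    have : Continuous fun v : sphere (0:EuclideanSpace ℝ (Fin (m+1))) 1 =>
        ⟪u, (v:EuclideanSpace ℝ (Fin (m+1)))⟫ :=
      Continuous.inner continuous_const continuous_subtype_val
    exact measurableSet_lt measurable_const this.measurable
  -- cone set
  have hC : Set.Ioo (0:ℝ) 1 • (Subtype.val '' A)
      = {y : EuclideanSpace ℝ (Fin (m+1)) | ‖y‖ < 1 ∧ s * ‖y‖ < ⟪u, y⟫} := by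
    ext y
    constructor
    · rintro ⟨c, hc, -, ⟨v, hv, rfl⟩, rfl⟩
      have hvn : ‖(v:EuclideanSpace ℝ (Fin (m+1)))‖ = 1 := by simp
      refine ⟨?_, ?_⟩
      · rw [norm_smul, hvn, Real.norm_eq_abs, abs_of_pos hc.1, mul_one]; exact hc.2
      · rw [norm_smul, hvn, Real.norm_eq_abs, abs_of_pos hc.1, mul_one, real_inner_smul_right]
        calc s * c < ⟪u, (v:EuclideanSpace ℝ (Fin (m+1)))⟫ * c := mul_lt_mul_of_pos_right hv hc.1
          _ = c * ⟪u, (v:EuclideanSpace ℝ (Fin (m+1)))⟫ := mul_comm _ _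
    · rintro ⟨h1, h2⟩
      have hy0 : (0:ℝ) < ‖y‖ := by
        rcases eq_or_ne y 0 with rfl | hy
        · simp only [inner_zero_right, norm_zero, mul_zero, lt_self_iff_false] at h2
        · exact norm_pos_iff.mpr hy
      refine ⟨‖y‖, ⟨hy0, h1⟩, _,
        ⟨(⟨‖y‖⁻¹ • y, ?_⟩ : sphere (0:EuclideanSpace ℝ (Fin (m+1))) 1), ?_, rfl⟩, ?_⟩
      · simp [norm_smul, inv_mul_cancel₀ hy0.ne']
      · simp only [hAdef, Set.mem_setOf_eq, real_inner_smul_right]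
        rw [lt_inv_mul_iff₀ hy0, mul_comm]
        exact h2
      · simp [smul_smul, mul_inv_cancel₀ hy0.ne']
  -- measure values
  have hdim : Module.finrank ℝ (EuclideanSpace ℝ (Fin (m+1))) = m + 1 := by
    simp [finrank_euclideanSpace]
  have hballpos : (0:ℝ≥0∞) < volume (ball (0:EuclideanSpace ℝ (Fin (m+1))) 1) :=
    measure_ball_pos _ _ one_pos
  have hballfin : volume (ball (0:EuclideanSpace ℝ (Fin (m+1))) 1) ≠ ⊤ :=
    measure_ball_lt_top.ne
  have htotal : (volume : Measure (EuclideanSpace ℝ (Fin (m+1)))).toSphere Set.univ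
      = (m+1 : ℕ) * volume (ball (0:EuclideanSpace ℝ (Fin (m+1))) 1) := by
    rw [Measure.toSphere_apply_univ, hdim]
  have hAval : (volume : Measure (EuclideanSpace ℝ (Fin (m+1)))).toSphere A
      = (m+1 : ℕ) * volume {y : EuclideanSpace ℝ (Fin (m+1)) | ‖y‖ < 1 ∧ s * ‖y‖ < ⟪u, y⟫} := by
    rw [Measure.toSphere_apply' _ hAmeas, hdim, hC]
  have hk0 : (volume : Measure (EuclideanSpace ℝ (Fin (m+1)))).toSphere Set.univ ≠ 0 := by
    rw [htotal]
    exact mul_ne_zero (by simp) hballpos.ne'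
  have hktop : (volume : Measure (EuclideanSpace ℝ (Fin (m+1)))).toSphere Set.univ ≠ ⊤ := by
    rw [htotal]
    exact ENNReal.mul_ne_top (ENNReal.natCast_ne_top _) hballfin
  haveI hprob : IsProbabilityMeasure (uniformSphere (m+1)) := by
    constructor
    rw [uniformSphere, Measure.smul_apply, smul_eq_mul, ENNReal.inv_mul_cancel hk0 hktop]
  rw [hevent, prob_compl_eq_one_sub hAmeas]
  have hAle : uniformSphere (m+1) A ≤ 1 := prob_le_one
  rw [ENNReal.toReal_sub_of_le hAle ENNReal.one_ne_top, ENNReal.toReal_one, ge_iff_le,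
    sub_le_sub_iff_left]
  -- now bound (uniformSphere A).toReal
  set vC := volume {y : EuclideanSpace ℝ (Fin (m+1)) | ‖y‖ < 1 ∧ s * ‖y‖ < ⟪u, y⟫} with hvC
  have hvBt : 0 < (volume (ball (0:EuclideanSpace ℝ (Fin (m+1))) 1)).toReal :=
    ENNReal.toReal_pos hballpos.ne' hballfin
  have hPA : (uniformSphere (m+1) A).toReal
      = vC.toReal / (volume (ball (0:EuclideanSpace ℝ (Fin (m+1))) 1)).toReal := by
    have hne0 : ((m+1 : ℕ) : ℝ≥0∞) ≠ 0 := Nat.cast_ne_zero.mpr (Nat.succ_ne_zero m)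
    have hnetop : ((m+1 : ℕ) : ℝ≥0∞) ≠ ⊤ := ENNReal.natCast_ne_top _
    have hPA' : uniformSphere (m+1) A
        = vC / volume (ball (0:EuclideanSpace ℝ (Fin (m+1))) 1) := by
      rw [uniformSphere, Measure.smul_apply, smul_eq_mul, htotal, hAval,
        ENNReal.mul_inv (Or.inr hballfin) (Or.inl hnetop),
        mul_mul_mul_comm, ENNReal.inv_mul_cancel hne0 hnetop, one_mul,
        div_eq_mul_inv, mul_comm]
    rw [hPA', ENNReal.toReal_div]
  rw [hPA, div_le_iff₀ hvBt]
  -- real-number chain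
  have hG1 : 0 < Real.Gamma ((m:ℝ)/2+1) := Real.Gamma_pos_of_pos (by linarith)
  have hc1nn : 0 ≤ Real.sqrt Real.pi ^ m / Real.Gamma ((m:ℝ)/2+1) := by positivity
  have hchain1 : vC.toReal ≤ (Real.sqrt Real.pi ^ m / Real.Gamma ((m:ℝ)/2+1)) *
      (∫ a in Set.Ioo (0:ℝ) 1, (min (a * Real.sqrt (1-s^2) / s) (Real.sqrt (1-a^2)))^m) := by
    have h := volC_le m (by omega) s hs0 hs1 u hu
    rw [← ENNReal.ofReal_mul hc1nn] at h
    have hInn : 0 ≤ ∫ a in Set.Ioo (0:ℝ) 1,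
        (min (a * Real.sqrt (1-s^2) / s) (Real.sqrt (1-a^2)))^m := by
      apply setIntegral_nonneg measurableSet_Ioo
      intro a ha
      apply pow_nonneg
      exact le_min (div_nonneg (mul_nonneg ha.1.le (Real.sqrt_nonneg _)) hs0.le)
        (Real.sqrt_nonneg _)
    calc vC.toReal ≤ (ENNReal.ofReal ((Real.sqrt Real.pi ^ m / Real.Gamma ((m:ℝ)/2+1)) *
          ∫ a in Set.Ioo (0:ℝ) 1,
            (min (a * Real.sqrt (1-s^2) / s) (Real.sqrt (1-a^2)))^m)).toReal :=
        ENNReal.toReal_mono ENNReal.ofReal_ne_top h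
      _ = _ := ENNReal.toReal_ofReal (by positivity)
  have hchain2 : vC.toReal ≤ (Real.sqrt Real.pi ^ m / Real.Gamma ((m:ℝ)/2+1)) *
      (Real.exp (-(s^2*m)/2) * (s/(m+1) + 1/(s*m))) :=
    le_trans hchain1 (mul_le_mul_of_nonneg_left (integral_R_le m hm s hs0 hs1) hc1nn)
  have hchain3 : vC.toReal
      ≤ (Real.sqrt Real.pi ^ (m+1) / Real.Gamma (((m:ℝ)+1)/2+1)) *
        ((Real.Gamma (((m:ℝ)+1)/2) / (Real.sqrt Real.pi * Real.Gamma ((m:ℝ)/2))) *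
         (1/(s*((m:ℝ)-2))) * Real.exp (-(s^2*((m:ℝ)-2))/2)) :=
    le_trans hchain2 (const_ineq m hm s hs0 hs1)
  -- ball volume value
  have hvBval : (volume (ball (0:EuclideanSpace ℝ (Fin (m+1))) 1)).toReal
      = Real.sqrt Real.pi ^ (m+1) / Real.Gamma (((m:ℝ)+1)/2+1) := by
    rw [EuclideanSpace.volume_ball, Fintype.card_fin]
    rw [ENNReal.ofReal_one, one_pow, one_mul, ENNReal.toReal_ofReal (by positivity)]
    push_cast
    ring_nf
  -- cast conversions in goal
  have hc3 : ((m:ℝ)+1)-3 = (m:ℝ)-2 := by ring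
  have hm2ne : ((m:ℝ)-2) ≠ 0 := by linarith
  have hB1 : ‖x‖/(r*((m:ℝ)-2)) = 1/(s*((m:ℝ)-2)) := by
    rw [hsdef]; field_simp
  have hB2 : -(r^2*((m:ℝ)-2))/(2*‖x‖^2) = -(s^2*((m:ℝ)-2))/2 := by
    rw [hsdef]; field_simp
  push_cast
  rw [hc3, show ((m:ℝ)+1-1)/2 = (m:ℝ)/2 by ring, hB1, hB2, hvBval]
  calc vC.toReal
      ≤ (Real.sqrt Real.pi ^ (m+1) / Real.Gamma (((m:ℝ)+1)/2+1)) *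
        ((Real.Gamma (((m:ℝ)+1)/2) / (Real.sqrt Real.pi * Real.Gamma ((m:ℝ)/2))) *
         (1/(s*((m:ℝ)-2))) * Real.exp (-(s^2*((m:ℝ)-2))/2)) := hchain3
    _ = Real.Gamma (((m:ℝ)+1)/2) / (Real.sqrt Real.pi * Real.Gamma ((m:ℝ)/2)) *
        (1/(s*((m:ℝ)-2))) * Real.exp (-(s^2*((m:ℝ)-2))/2) *
        (Real.sqrt Real.pi ^ (m+1) / Real.Gamma (((m:ℝ)+1)/2+1)) := by ring
end

section
/- Let φ denote the standard Gaussian density on ℝ^n. For any bounded measurable set K ⊆ ℝ^n, (d/dt) ∫_{(1+t)K} φ(x) dx evaluated at t = 0 equals ∫_K (n - ‖y‖²) φ(y) dy. -/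
open MeasureTheory
open scoped Pointwise

private lemma gauss_dilate_deriv (n : ℕ) (c t : ℝ) (y : EuclideanSpace ℝ (Fin n)) :
    HasDerivAt (fun s => (1 + s) ^ n * (c * Real.exp (-((1 + s) ^ 2 * ‖y‖ ^ 2) / 2)))
      (c * ((n : ℝ) * (1 + t) ^ (n - 1) - (1 + t) ^ (n + 1) * ‖y‖ ^ 2) *
        Real.exp (-((1 + t) ^ 2 * ‖y‖ ^ 2) / 2)) t := by
  have h1 : HasDerivAt (fun s : ℝ => 1 + s) 1 t := (hasDerivAt_id t).const_add 1
  have h2 : HasDerivAt (fun s : ℝ => -((1 + s) ^ 2 * ‖y‖ ^ 2) / 2)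
      (-((2 * (1 + t) ^ 1 * 1) * ‖y‖ ^ 2) / 2) t :=
    (((h1.pow 2).mul_const (‖y‖ ^ 2)).neg).div_const 2
  have h4 := (h1.pow n).mul ((h2.exp).const_mul c)
  refine HasDerivAt.congr_deriv h4 ?_
  simp only [Pi.pow_apply]
  rw [pow_succ]
  cases n with
  | zero => simp; ring
  | succ m => rw [Nat.succ_sub_one]; push_cast; rw [pow_succ]; ring

theorem stmt_9 (n : ℕ) (K : Set (EuclideanSpace ℝ (Fin n)))
    (hK : MeasurableSet K) (hKb : Bornology.IsBounded K) :
    HasDerivAt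
      (fun t : ℝ => ∫ x in (1 + t) • K,
        (2 * Real.pi) ^ (-(n : ℝ) / 2) * Real.exp (-‖x‖ ^ 2 / 2))
      (∫ y in K, ((n : ℝ) - ‖y‖ ^ 2) *
        ((2 * Real.pi) ^ (-(n : ℝ) / 2) * Real.exp (-‖y‖ ^ 2 / 2)))
      0 := by
  set c : ℝ := (2 * Real.pi) ^ (-(n : ℝ) / 2) with hc
  have hc0 : 0 < c := Real.rpow_pos_of_pos (by positivity) _
  obtain ⟨R, hR⟩ := hKb.exists_norm_le
  set R' : ℝ := max R 0 with hR'
  have hR'0 : (0 : ℝ) ≤ R' := le_max_right _ _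
  have hRK : ∀ y ∈ K, ‖y‖ ≤ R' := fun y hy => (hR y hy).trans (le_max_left _ _)
  set F : ℝ → EuclideanSpace ℝ (Fin n) → ℝ := fun t y =>
    (1 + t) ^ n * (c * Real.exp (-((1 + t) ^ 2 * ‖y‖ ^ 2) / 2)) with hFdef
  set F' : ℝ → EuclideanSpace ℝ (Fin n) → ℝ := fun t y =>
    c * ((n : ℝ) * (1 + t) ^ (n - 1) - (1 + t) ^ (n + 1) * ‖y‖ ^ 2) *
      Real.exp (-((1 + t) ^ 2 * ‖y‖ ^ 2) / 2) with hF'def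
  have hKfin : volume K < ⊤ := hKb.measure_lt_top
  -- measurability
  have hFc : ∀ t : ℝ, Continuous (F t) := by
    intro t; apply Continuous.mul continuous_const
    exact continuous_const.mul (Real.continuous_exp.comp (by fun_prop))
  have hF'c : Continuous (F' 0) := by
    apply Continuous.mul
    · exact continuous_const.mul (by fun_prop)
    · exact Real.continuous_exp.comp (by fun_prop)
  -- integrability of F 0
  haveI : IsFiniteMeasure (volume.restrict K) := ⟨by rwa [Measure.restrict_apply_univ]⟩
  have hexp_le : ∀ (t : ℝ) (y : EuclideanSpace ℝ (Fin n)),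
      Real.exp (-((1 + t) ^ 2 * ‖y‖ ^ 2) / 2) ≤ 1 := by
    intro t y
    rw [Real.exp_le_one_iff]
    have : (0 : ℝ) ≤ (1 + t) ^ 2 * ‖y‖ ^ 2 := by positivity
    linarith
  have hF_int : Integrable (F 0) (volume.restrict K) := by
    refine (integrable_const c).mono' ((hFc 0).aestronglyMeasurable) ?_
    filter_upwards with y
    have he := hexp_le 0 y
    have hep := (Real.exp_pos (-((1 + (0:ℝ)) ^ 2 * ‖y‖ ^ 2) / 2)).le
    have h1 : ((1:ℝ) + 0) ^ n = 1 := by norm_num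
    simp only [hFdef, Real.norm_eq_abs]
    rw [h1, one_mul, abs_of_nonneg (by positivity)]
    nlinarith
  -- bound for F'
  set B : ℝ := c * ((n : ℝ) * 2 ^ (n - 1) + 2 ^ (n + 1) * R' ^ 2) with hB
  have h_bound : ∀ᵐ y ∂(volume.restrict K), ∀ t ∈ Metric.ball (0 : ℝ) (1/2),
      ‖F' t y‖ ≤ B := by
    filter_upwards [ae_restrict_mem hK] with y hy t ht
    rw [Metric.mem_ball, Real.dist_eq, sub_zero] at ht
    have h1t : |1 + t| ≤ 2 := by
      rw [abs_le]; have := abs_lt.1 ht; constructor <;> linarith [this.1, this.2]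
    have hyR : ‖y‖ ^ 2 ≤ R' ^ 2 := by
      have := hRK y hy
      exact pow_le_pow_left₀ (norm_nonneg y) this 2
    have hpow : ∀ k : ℕ, |1 + t| ^ k ≤ 2 ^ k :=
      fun k => pow_le_pow_left₀ (abs_nonneg _) h1t k
    have hD : |(n : ℝ) * (1 + t) ^ (n - 1) - (1 + t) ^ (n + 1) * ‖y‖ ^ 2|
        ≤ (n : ℝ) * 2 ^ (n - 1) + 2 ^ (n + 1) * R' ^ 2 := by
      refine (abs_sub _ _).trans ?_
      gcongr ?_ + ?_
      · rw [abs_mul, abs_pow, Nat.abs_cast]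
        exact mul_le_mul_of_nonneg_left (hpow _) (Nat.cast_nonneg n)
      · rw [abs_mul, abs_pow, abs_of_nonneg (by positivity : (0:ℝ) ≤ ‖y‖ ^ 2)]
        exact mul_le_mul (hpow _) hyR (by positivity) (by positivity)
    calc ‖F' t y‖ = c * |(n : ℝ) * (1 + t) ^ (n - 1) - (1 + t) ^ (n + 1) * ‖y‖ ^ 2| *
            Real.exp (-((1 + t) ^ 2 * ‖y‖ ^ 2) / 2) := by
          simp only [hF'def, Real.norm_eq_abs, abs_mul, abs_of_pos hc0,
            abs_of_pos (Real.exp_pos _)]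
      _ ≤ c * ((n : ℝ) * 2 ^ (n - 1) + 2 ^ (n + 1) * R' ^ 2) * 1 := by
          refine mul_le_mul ?_ (hexp_le t y) (Real.exp_pos _).le (by positivity)
          exact mul_le_mul_of_nonneg_left hD hc0.le
      _ = B := mul_one _
  have h_diff : ∀ᵐ y ∂(volume.restrict K), ∀ t ∈ Metric.ball (0 : ℝ) (1/2),
      HasDerivAt (fun s => F s y) (F' t y) t := by
    filter_upwards with y t _
    exact gauss_dilate_deriv n c t y
  have main := hasDerivAt_integral_of_dominated_loc_of_deriv_le (μ := volume.restrict K)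
    (F := F) (F' := F') (bound := fun _ => B) (Metric.ball_mem_nhds 0 (by norm_num : (0:ℝ) < 1/2))
    (Filter.Eventually.of_forall fun t => (hFc t).aestronglyMeasurable)
    hF_int hF'c.aestronglyMeasurable h_bound
    ((integrableOn_const hKfin.ne))
    h_diff
  have hD := main.2
  -- identify the derivative value
  have hval : F' 0 = fun y => ((n : ℝ) - ‖y‖ ^ 2) * (c * Real.exp (-‖y‖ ^ 2 / 2)) := by
    funext y
    simp only [hF'def]
    have h2 : -((1 + (0:ℝ)) ^ 2 * ‖y‖ ^ 2) / 2 = -‖y‖ ^ 2 / 2 := by ring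
    rw [h2]
    norm_num
    ring
  rw [hval] at hD
  -- change of variables to identify the function near 0
  refine hD.congr_of_eventuallyEq ?_
  have hev : ∀ᶠ t : ℝ in nhds 0, (-1 : ℝ) < t := eventually_gt_nhds (by norm_num)
  filter_upwards [hev] with t ht
  have hpos : (0 : ℝ) < 1 + t := by linarith
  have h := MeasureTheory.Measure.setIntegral_comp_smul_of_pos
    (volume : Measure (EuclideanSpace ℝ (Fin n)))
    (fun x => c * Real.exp (-‖x‖ ^ 2 / 2)) K hpos
  rw [finrank_euclideanSpace_fin] at h
  have e1 : (∫ y in K, F t y) =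
      (1 + t) ^ n * ∫ y in K, c * Real.exp (-‖(1 + t) • y‖ ^ 2 / 2) := by
    rw [← integral_const_mul]
    refine integral_congr_ae (Filter.Eventually.of_forall fun y => ?_)
    simp only [hFdef]
    rw [norm_smul, Real.norm_eq_abs, mul_pow, sq_abs]
  show (∫ x in (1 + t) • K, c * Real.exp (-‖x‖ ^ 2 / 2)) = ∫ y in K, F t y
  rw [e1, h, smul_eq_mul, ← mul_assoc, mul_inv_cancel₀ (by positivity), one_mul]
end
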